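/- For every P ∈ E(ℚ_p), one has 0 ≤ ε(P) ≤ v(Δ(W)). -/

import Mathlib

open WeierstrassCurve Classical

/-- The first duplication polynomial `δ₁(x₁,x₂) = x₁⁴ − b₄x₁²x₂² − 2b₆x₁x₂³ − b₈x₂⁴`. -/
def delta1 {R : Type*} [CommRing R] (W : WeierstrassCurve R) (x₁ x₂ : R) : R :=
  x₁ ^ 4 - W.b₄ * x₁ ^ 2 * x₂ ^ 2 - 2 * W.b₆ * x₁ * x₂ ^ 3 - W.b₈ * x₂ ^ 4

/-- The second duplication polynomial `δ₂(x₁,x₂) = 4x₁³x₂ + b₂x₁²x₂² + 2b₄x₁x₂³ + b₆x₂⁴`. -/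
def delta2 {R : Type*} [CommRing R] (W : WeierstrassCurve R) (x₁ x₂ : R) : R :=
  4 * x₁ ^ 3 * x₂ + W.b₂ * x₁ ^ 2 * x₂ ^ 2 + 2 * W.b₄ * x₁ * x₂ ^ 3 + W.b₆ * x₂ ^ 4

variable {p : ℕ} [Fact p.Prime]

/-- `min{v(x₁), v(x₂)}`, where terms with argument `0` are omitted from the minimum.
(This is only meaningful for `(x₁, x₂) ≠ (0, 0)`.) -/
noncomputable def vmin (x₁ x₂ : ℚ_[p]) : ℤ :=
  if x₁ = 0 then x₂.valuation
  else if x₂ = 0 then x₁.valuation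
  else min x₁.valuation x₂.valuation

/-- The canonical pair of Kummer coordinates of a point `P`: `(1, 0)` if `P = O`, and
`(x(P), 1)` if `P` is affine.  (Any pair of Kummer coordinates for `P` is a nonzero
scalar multiple of this pair, and `ε` is independent of this choice.) -/
noncomputable def kummer {W : Affine ℚ_[p]} : W.Point → ℚ_[p] × ℚ_[p]
  | .zero => (1, 0)
  | @Affine.Point.some _ _ _ x _ _ => (x, 1)

/-- The local error function
`ε(P) = min{v(δ₁(x₁,x₂)), v(δ₂(x₁,x₂))} − 4·min{v(x₁), v(x₂)}`,
computed on the canonical pair of Kummer coordinates of `P`. -/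
noncomputable def eps (W : Affine ℚ_[p]) (P : W.Point) : ℤ :=
  vmin (delta1 W (kummer P).1 (kummer P).2) (delta2 W (kummer P).1 (kummer P).2)
    - 4 * vmin (kummer P).1 (kummer P).2

/-- The local height correction function `μ(P) = Σ_{n=0}^∞ 4^{−n−1} ε(2ⁿP)`. -/
noncomputable def mu (W : Affine ℚ_[p]) (P : W.Point) : ℝ :=
  ∑' n : ℕ, (eps W ((2 ^ n : ℕ) • P) : ℝ) / 4 ^ (n + 1)


/-! ### Auxiliary lemmas -/

private lemma coe_norm_le_one' (z : ℤ_[p]) : ‖(z : ℚ_[p])‖ ≤ 1 := z.property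

private lemma val_le_val' {x y : ℚ_[p]} (hx : x ≠ 0) (h : ‖x‖ ≤ ‖y‖) :
    y.valuation ≤ x.valuation := by
  have hy : y ≠ 0 := by
    rintro rfl
    rw [norm_zero] at h
    exact hx (norm_le_zero_iff.mp h)
  have hp1 : (1 : ℝ) < (p : ℝ) := by exact_mod_cast (Fact.out : p.Prime).one_lt
  rw [Padic.norm_eq_zpow_neg_valuation hx, Padic.norm_eq_zpow_neg_valuation hy,
    zpow_le_zpow_iff_right₀ hp1] at h
  omega

private lemma val_nonneg' {x : ℚ_[p]} (h : ‖x‖ ≤ 1) : 0 ≤ x.valuation :=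
  (Padic.norm_le_one_iff_val_nonneg x).1 h


/-- `0 ≤ ε(P) ≤ v(Δ(W))`. -/
theorem statement5 (W : Affine ℚ_[p]) (hΔ : W.Δ ≠ 0)
    (hint : ‖W.a₁‖ ≤ 1 ∧ ‖W.a₂‖ ≤ 1 ∧ ‖W.a₃‖ ≤ 1 ∧ ‖W.a₄‖ ≤ 1 ∧ ‖W.a₆‖ ≤ 1)
    (P : W.Point) :
    0 ≤ eps W P ∧ eps W P ≤ W.Δ.valuation := by
  obtain ⟨h1, h2, h3, h4, h6⟩ := hint
  have hp1 : (1 : ℝ) < (p : ℝ) := by exact_mod_cast (Fact.out : p.Prime).one_lt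
  have c2 : ((2 : ℤ_[p]) : ℚ_[p]) = 2 := by norm_cast
  have c4 : ((4 : ℤ_[p]) : ℚ_[p]) = 4 := by norm_cast
  have c8 : ((8 : ℤ_[p]) : ℚ_[p]) = 8 := by norm_cast
  have c9 : ((9 : ℤ_[p]) : ℚ_[p]) = 9 := by norm_cast
  have c10 : ((10 : ℤ_[p]) : ℚ_[p]) = 10 := by norm_cast
  have c12 : ((12 : ℤ_[p]) : ℚ_[p]) = 12 := by norm_cast
  have c27 : ((27 : ℤ_[p]) : ℚ_[p]) = 27 := by norm_cast
  have c32 : ((32 : ℤ_[p]) : ℚ_[p]) = 32 := by norm_cast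
  have c48 : ((48 : ℤ_[p]) : ℚ_[p]) = 48 := by norm_cast
  set A1 : ℤ_[p] := ⟨W.a₁, h1⟩ with hA1
  set A2 : ℤ_[p] := ⟨W.a₂, h2⟩ with hA2
  set A3 : ℤ_[p] := ⟨W.a₃, h3⟩ with hA3
  set A4 : ℤ_[p] := ⟨W.a₄, h4⟩ with hA4
  set A6 : ℤ_[p] := ⟨W.a₆, h6⟩ with hA6
  have e1 : (A1 : ℚ_[p]) = W.a₁ := rfl
  have e2 : (A2 : ℚ_[p]) = W.a₂ := rfl
  have e3 : (A3 : ℚ_[p]) = W.a₃ := rfl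
  have e4 : (A4 : ℚ_[p]) = W.a₄ := rfl
  have e6 : (A6 : ℚ_[p]) = W.a₆ := rfl
  have hb2 : W.b₂ = ((A1 ^ 2 + 4 * A2 : ℤ_[p]) : ℚ_[p]) := by
    rw [WeierstrassCurve.b₂]; push_cast [e1, e2, c2, c4, c8, c9, c10, c12, c27, c32, c48]; try ring
  have hb4 : W.b₄ = ((2 * A4 + A1 * A3 : ℤ_[p]) : ℚ_[p]) := by
    rw [WeierstrassCurve.b₄]; push_cast [e1, e3, e4, c2, c4, c8, c9, c10, c12, c27, c32, c48]; try ring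
  have hb6 : W.b₆ = ((A3 ^ 2 + 4 * A6 : ℤ_[p]) : ℚ_[p]) := by
    rw [WeierstrassCurve.b₆]; push_cast [e3, e6, c2, c4, c8, c9, c10, c12, c27, c32, c48]; try ring
  have hb8 : W.b₈ = ((A1 ^ 2 * A6 + 4 * A2 * A6 - A1 * A3 * A4 + A2 * A3 ^ 2 - A4 ^ 2 :
      ℤ_[p]) : ℚ_[p]) := by
    rw [WeierstrassCurve.b₈]; push_cast [e1, e2, e3, e4, e6, c2, c4, c8, c9, c10, c12, c27, c32, c48]; try ring
  have hDrep : W.Δ = ((-(A1 ^ 2 + 4 * A2) ^ 2 *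
      (A1 ^ 2 * A6 + 4 * A2 * A6 - A1 * A3 * A4 + A2 * A3 ^ 2 - A4 ^ 2)
      - 8 * (2 * A4 + A1 * A3) ^ 3 - 27 * (A3 ^ 2 + 4 * A6) ^ 2
      + 9 * (A1 ^ 2 + 4 * A2) * (2 * A4 + A1 * A3) * (A3 ^ 2 + 4 * A6) : ℤ_[p]) : ℚ_[p]) := by
    rw [WeierstrassCurve.Δ, hb2, hb4, hb6, hb8]; push_cast [c2, c4, c8, c9, c10, c12, c27, c32, c48]; try ring
  have nΔ : ‖W.Δ‖ ≤ 1 := by rw [hDrep]; exact coe_norm_le_one' _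
  have vΔ : 0 ≤ W.Δ.valuation := val_nonneg' nΔ
  have nb2 : ‖W.b₂‖ ≤ 1 := by rw [hb2]; exact coe_norm_le_one' _
  have nb4 : ‖W.b₄‖ ≤ 1 := by rw [hb4]; exact coe_norm_le_one' _
  have n2b6 : ‖2 * W.b₆‖ ≤ 1 := by
    rw [show (2 : ℚ_[p]) * W.b₆ = ((2 * (A3 ^ 2 + 4 * A6) : ℤ_[p]) : ℚ_[p]) by
      rw [hb6]; push_cast [c2, c4, c8, c9, c10, c12, c27, c32, c48]; try ring]
    exact coe_norm_le_one' _
  have n2b4 : ‖2 * W.b₄‖ ≤ 1 := by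
    rw [show (2 : ℚ_[p]) * W.b₄ = ((2 * (2 * A4 + A1 * A3) : ℤ_[p]) : ℚ_[p]) by
      rw [hb4]; push_cast [c2, c4, c8, c9, c10, c12, c27, c32, c48]; try ring]
    exact coe_norm_le_one' _
  have nb6 : ‖W.b₆‖ ≤ 1 := by rw [hb6]; exact coe_norm_le_one' _
  have nb8 : ‖W.b₈‖ ≤ 1 := by rw [hb8]; exact coe_norm_le_one' _
  have n4 : ‖(4 : ℚ_[p])‖ ≤ 1 := by
    rw [show (4 : ℚ_[p]) = ((4 : ℤ_[p]) : ℚ_[p]) by push_cast [c2, c4, c8, c9, c10, c12, c27, c32, c48]; try ring]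
    exact coe_norm_le_one' _
  cases P with
  | zero =>
      have hk : kummer (W := W) Affine.Point.zero = (1, 0) := rfl
      have hval : eps W Affine.Point.zero = 0 := by
        simp only [eps, hk]
        have hd1 : delta1 W (1 : ℚ_[p]) 0 = 1 := by simp [delta1]
        have hd2 : delta2 W (1 : ℚ_[p]) 0 = 0 := by simp [delta2]
        rw [hd1, hd2]
        simp [vmin, Padic.valuation_one]
      rw [hval]
      exact ⟨le_refl 0, vΔ⟩
  | @some x y hns =>
      have hk : kummer (W := W) (Affine.Point.some x y hns) = (x, 1) := rfl
      have heps : eps W (Affine.Point.some x y hns) =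
          vmin (delta1 W x 1) (delta2 W x 1) - 4 * vmin x 1 := by
        simp only [eps, hk]
      rw [heps]
      set d1 : ℚ_[p] := delta1 W x 1 with hd1def
      set d2 : ℚ_[p] := delta2 W x 1 with hd2def
      have hd1x : d1 = x ^ 4 - W.b₄ * x ^ 2 - 2 * W.b₆ * x - W.b₈ := by
        rw [hd1def, delta1]; ring
      have hd2x : d2 = 4 * x ^ 3 + W.b₂ * x ^ 2 + 2 * W.b₄ * x + W.b₆ := by
        rw [hd2def, delta2]; ring
      by_cases hx : ‖x‖ ≤ 1
      · -- integral x
        set X : ℤ_[p] := ⟨x, hx⟩ with hX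
        have eX : (X : ℚ_[p]) = x := rfl
        have nd1 : ‖d1‖ ≤ 1 := by
          rw [show d1 = ((X ^ 4 - (2 * A4 + A1 * A3) * X ^ 2 - 2 * (A3 ^ 2 + 4 * A6) * X -
              (A1 ^ 2 * A6 + 4 * A2 * A6 - A1 * A3 * A4 + A2 * A3 ^ 2 - A4 ^ 2) : ℤ_[p]) :
              ℚ_[p]) by rw [hd1x, hb4, hb6, hb8]; push_cast [eX, c2, c4, c8, c9, c10, c12, c27, c32, c48]; try ring]
          exact coe_norm_le_one' _
        have nd2 : ‖d2‖ ≤ 1 := by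
          rw [show d2 = ((4 * X ^ 3 + (A1 ^ 2 + 4 * A2) * X ^ 2 +
              2 * (2 * A4 + A1 * A3) * X + (A3 ^ 2 + 4 * A6) : ℤ_[p]) : ℚ_[p]) by
            rw [hd2x, hb2, hb4, hb6]; push_cast [eX, c2, c4, c8, c9, c10, c12, c27, c32, c48]; try ring]
          exact coe_norm_le_one' _
        set Aq : ℚ_[p] := W.b₂ ^ 2 - 32 * W.b₄ - 8 * W.b₂ * x - 48 * x ^ 2 with hAq
        set Bq : ℚ_[p] := W.b₂ * W.b₄ - 27 * W.b₆ - 10 * W.b₄ * x - W.b₂ * x ^ 2 + 12 * x ^ 3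
          with hBq
        have nAq : ‖Aq‖ ≤ 1 := by
          rw [show Aq = (((A1 ^ 2 + 4 * A2) ^ 2 - 32 * (2 * A4 + A1 * A3) -
              8 * (A1 ^ 2 + 4 * A2) * X - 48 * X ^ 2 : ℤ_[p]) : ℚ_[p]) by
            rw [hAq, hb2, hb4]; push_cast [eX, c2, c4, c8, c9, c10, c12, c27, c32, c48]; try ring]
          exact coe_norm_le_one' _
        have nBq : ‖Bq‖ ≤ 1 := by
          rw [show Bq = (((A1 ^ 2 + 4 * A2) * (2 * A4 + A1 * A3) - 27 * (A3 ^ 2 + 4 * A6) -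
              10 * (2 * A4 + A1 * A3) * X - (A1 ^ 2 + 4 * A2) * X ^ 2 + 12 * X ^ 3 : ℤ_[p]) :
              ℚ_[p]) by rw [hBq, hb2, hb4, hb6]; push_cast [eX, c2, c4, c8, c9, c10, c12, c27, c32, c48]; try ring]
          exact coe_norm_le_one' _
        have key : Aq * d1 + Bq * d2 = W.Δ := by
          rw [hAq, hBq, hd1x, hd2x, WeierstrassCurve.Δ, WeierstrassCurve.b₂,
            WeierstrassCurve.b₄, WeierstrassCurve.b₆, WeierstrassCurve.b₈]
          ring
        have hvx : vmin x 1 = 0 := by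
          rw [vmin]
          split_ifs with h0 h1'
          · exact Padic.valuation_one
          · exact absurd h1' one_ne_zero
          · rw [Padic.valuation_one]
            exact min_eq_right (val_nonneg' hx)
        rw [hvx, mul_zero, sub_zero]
        rw [vmin]
        split_ifs with hz1 hz2
        · -- d1 = 0
          by_cases hz2 : d2 = 0
          · exact absurd (by rw [← key, hz1, hz2]; ring) hΔ
          · constructor
            · exact val_nonneg' nd2
            · refine val_le_val' hΔ ?_
              have : W.Δ = Bq * d2 := by rw [← key, hz1]; ring
              calc ‖W.Δ‖ = ‖Bq‖ * ‖d2‖ := by rw [this, norm_mul]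
                _ ≤ 1 * ‖d2‖ := by gcongr
                _ = ‖d2‖ := one_mul _
        · -- d1 ≠ 0, d2 = 0
          constructor
          · exact val_nonneg' nd1
          · refine val_le_val' hΔ ?_
            have : W.Δ = Aq * d1 := by rw [← key, hz2]; ring
            calc ‖W.Δ‖ = ‖Aq‖ * ‖d1‖ := by rw [this, norm_mul]
              _ ≤ 1 * ‖d1‖ := by gcongr
              _ = ‖d1‖ := one_mul _
        · -- both nonzero
          constructor
          · exact le_min (val_nonneg' nd1) (val_nonneg' nd2)
          · have hmax : ‖W.Δ‖ ≤ max ‖d1‖ ‖d2‖ := by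
              calc ‖W.Δ‖ = ‖Aq * d1 + Bq * d2‖ := by rw [key]
                _ ≤ max ‖Aq * d1‖ ‖Bq * d2‖ := Padic.nonarchimedean _ _
                _ ≤ max ‖d1‖ ‖d2‖ := by
                    apply max_le_max <;> rw [norm_mul]
                    · calc ‖Aq‖ * ‖d1‖ ≤ 1 * ‖d1‖ := by gcongr
                        _ = ‖d1‖ := one_mul _
                    · calc ‖Bq‖ * ‖d2‖ ≤ 1 * ‖d2‖ := by gcongr
                        _ = ‖d2‖ := one_mul _
            rcases le_max_iff.mp hmax with h | h
            · exact le_trans (min_le_left _ _) (val_le_val' hΔ h)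
            · exact le_trans (min_le_right _ _) (val_le_val' hΔ h)
      · -- non-integral x
        push_neg at hx
        have hx0 : x ≠ 0 := by
          intro h0; rw [h0, norm_zero] at hx; linarith
        have hx1 : (1 : ℝ) ≤ ‖x‖ := le_of_lt hx
        have hvxneg : x.valuation ≤ 0 := by
          have : x.valuation ≤ (1 : ℚ_[p]).valuation :=
            val_le_val' one_ne_zero (by rw [norm_one]; exact hx1)
          rwa [Padic.valuation_one] at this
        have hvx : vmin x 1 = x.valuation := by
          rw [vmin]
          split_ifs with h0 h1'
          · exact absurd h0 hx0
          · rfl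
          · rw [Padic.valuation_one]
            exact min_eq_left hvxneg
        -- ‖d1 - x^4‖ ≤ ‖x‖^2
        have hb4x : ‖W.b₄ * x ^ 2‖ ≤ ‖x‖ ^ 2 := by
          rw [norm_mul, norm_pow]
          calc ‖W.b₄‖ * ‖x‖ ^ 2 ≤ 1 * ‖x‖ ^ 2 := by gcongr
            _ = ‖x‖ ^ 2 := one_mul _
        have h2b6x : ‖2 * W.b₆ * x‖ ≤ ‖x‖ ^ 2 := by
          rw [norm_mul]
          calc ‖2 * W.b₆‖ * ‖x‖ ≤ 1 * ‖x‖ := by gcongr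
            _ = ‖x‖ := one_mul _
            _ ≤ ‖x‖ ^ 2 := by simpa using pow_le_pow_right₀ hx1 (by norm_num : 1 ≤ 2)
        have hb8x : ‖W.b₈‖ ≤ ‖x‖ ^ 2 := by
          calc ‖W.b₈‖ ≤ 1 := nb8
            _ ≤ ‖x‖ ^ 2 := one_le_pow₀ hx1
        have hsub : ‖d1 - x ^ 4‖ ≤ ‖x‖ ^ 2 := by
          have : d1 - x ^ 4 = -(W.b₄ * x ^ 2) + (-(2 * W.b₆ * x) + -W.b₈) := by
            rw [hd1x]; ring
          rw [this]
          refine le_trans (Padic.nonarchimedean _ _) (max_le (by rwa [norm_neg]) ?_)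
          refine le_trans (Padic.nonarchimedean _ _) (max_le (by rwa [norm_neg]) ?_)
          rwa [norm_neg]
        have hlt : ‖x‖ ^ 2 < ‖x‖ ^ 4 := pow_lt_pow_right₀ hx (by norm_num)
        have hnd1 : ‖d1‖ = ‖x‖ ^ 4 := by
          have hle : ‖d1‖ ≤ ‖x‖ ^ 4 := by
            have : d1 = (d1 - x ^ 4) + x ^ 4 := by ring
            rw [this]
            refine le_trans (Padic.nonarchimedean _ _) (max_le ?_ ?_)
            · exact le_trans hsub (le_of_lt hlt)
            · rw [norm_pow]
          have hge : ‖x‖ ^ 4 ≤ ‖d1‖ := by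
            have h' : ‖x ^ 4‖ ≤ max ‖d1‖ ‖x ^ 4 - d1‖ := by
              have : x ^ 4 = d1 + (x ^ 4 - d1) := by ring
              nth_rewrite 1 [this]
              exact Padic.nonarchimedean _ _
            rw [norm_pow, norm_sub_rev] at h'
            rcases max_cases ‖d1‖ ‖d1 - x ^ 4‖ with ⟨hm, _⟩ | ⟨hm, _⟩
            · rwa [hm] at h'
            · rw [hm] at h'
              linarith [le_trans h' hsub]
          linarith
        have hd1ne : d1 ≠ 0 := by
          intro h0
          rw [h0, norm_zero] at hnd1
          have : (0 : ℝ) < ‖x‖ ^ 4 := by positivity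
          linarith
        have hx4ne : x ^ 4 ≠ 0 := pow_ne_zero _ hx0
        have hvd1 : d1.valuation = 4 * x.valuation := by
          have hv4 : (x ^ 4).valuation = 4 * x.valuation := by
            have : x ^ 4 = x * (x * (x * x)) := by ring
            rw [this, Padic.valuation_mul hx0 (by simp [hx0]),
              Padic.valuation_mul hx0 (by simp [hx0]),
              Padic.valuation_mul hx0 hx0]
            ring
          have h1' : (x ^ 4).valuation ≤ d1.valuation :=
            val_le_val' hd1ne (by rw [hnd1, norm_pow])
          have h2' : d1.valuation ≤ (x ^ 4).valuation :=
            val_le_val' hx4ne (by rw [hnd1, norm_pow])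
          omega
        have hnd2 : ‖d2‖ ≤ ‖x‖ ^ 4 := by
          have t1 : ‖4 * x ^ 3‖ ≤ ‖x‖ ^ 4 := by
            rw [norm_mul, norm_pow]
            calc ‖(4 : ℚ_[p])‖ * ‖x‖ ^ 3 ≤ 1 * ‖x‖ ^ 3 := by gcongr
              _ = ‖x‖ ^ 3 := one_mul _
              _ ≤ ‖x‖ ^ 4 := pow_le_pow_right₀ hx1 (by norm_num)
          have t2 : ‖W.b₂ * x ^ 2‖ ≤ ‖x‖ ^ 4 := by
            rw [norm_mul, norm_pow]
            calc ‖W.b₂‖ * ‖x‖ ^ 2 ≤ 1 * ‖x‖ ^ 2 := by gcongr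
              _ = ‖x‖ ^ 2 := one_mul _
              _ ≤ ‖x‖ ^ 4 := le_of_lt hlt
          have t3 : ‖2 * W.b₄ * x‖ ≤ ‖x‖ ^ 4 := by
            rw [norm_mul]
            calc ‖2 * W.b₄‖ * ‖x‖ ≤ 1 * ‖x‖ := by gcongr
              _ = ‖x‖ := one_mul _
              _ ≤ ‖x‖ ^ 4 := by simpa using pow_le_pow_right₀ hx1 (by norm_num : 1 ≤ 4)
          have t4 : ‖W.b₆‖ ≤ ‖x‖ ^ 4 := by
            calc ‖W.b₆‖ ≤ 1 := nb6
              _ ≤ ‖x‖ ^ 4 := one_le_pow₀ hx1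
          rw [hd2x]
          refine le_trans (Padic.nonarchimedean _ _) (max_le ?_ t4)
          refine le_trans (Padic.nonarchimedean _ _) (max_le ?_ t3)
          exact le_trans (Padic.nonarchimedean _ _) (max_le t1 t2)
        have hvmin : vmin d1 d2 = 4 * x.valuation := by
          rw [vmin]
          split_ifs with hz1 hz2
          · exact absurd hz1 hd1ne
          · exact hvd1
          · rw [hvd1]
            refine min_eq_left ?_
            have : d1.valuation ≤ d2.valuation :=
              val_le_val' hz2 (by rw [hnd1]; exact hnd2)
            omega
        rw [hvmin, hvx]
        constructor
        · omega
        · have : (4 : ℤ) * x.valuation - 4 * x.valuation = 0 := by ring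
          omega
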